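/- Let α', β' ∈ ℂ and let h : ℤ → ℂ be a sequence with h_n ≠ 0 for all n ∈ ℤ such that h_{n+1} ≠ h_{n-1} for all n ∈ ℤ. If the quantity J̃_n = h_{n-1} + h_n + α' (1/h_{n-1} + 1/h_n) + β'/(h_{n-1} h_n) is independent of n, then h satisfies the second order nonlinear mapping h_{n-1} h_n h_{n+1} = α' h_n + β' for all n ∈ ℤ. -/

import Mathlib

/-- Conversely, if `h` is a nonvanishing sequence with `h_{n+1} ≠ h_{n-1}`
for all `n` and the quantity `J̃_n = h_{n-1} + h_n + α'(1/h_{n-1} + 1/h_n) + β'/(h_{n-1} h_n)`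
is independent of `n`, then `h` satisfies `h_{n-1} h_n h_{n+1} = α' h_n + β'`. -/
theorem conserved_J_implies_h_map (α' β' : ℂ) (h : ℤ → ℂ)
    (hne : ∀ n : ℤ, h n ≠ 0)
    (hsep : ∀ n : ℤ, h (n + 1) ≠ h (n - 1))
    (J : ℤ → ℂ)
    (hJ : ∀ n : ℤ, J n = h (n - 1) + h n + α' * (1 / h (n - 1) + 1 / h n)
      + β' / (h (n - 1) * h n))
    (hconst : ∀ m n : ℤ, J m = J n) :
    ∀ n : ℤ, h (n - 1) * h n * h (n + 1) = α' * h n + β' := by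
  intro n
  have e := hconst (n + 1) n
  rw [hJ, hJ] at e
  simp only [add_sub_cancel_right] at e
  have h1 := hne (n - 1)
  have h2 := hne n
  have h3 := hne (n + 1)
  have hd : h (n + 1) - h (n - 1) ≠ 0 := sub_ne_zero.mpr (hsep n)
  field_simp at e
  have key : (h (n - 1) * h n * h (n + 1) - (α' * h n + β')) * ((h (n + 1) - h (n - 1)) * h n) = 0 := by
    linear_combination (h n) * e
  rcases mul_eq_zero.mp key with k | k
  · linear_combination k
  · exact absurd k (mul_ne_zero hd h2)
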